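/- For every integer k, c₂(k) = Σ_{d square-free, d² ∣ k} σ_d; here the sum ranges over all square-free positive integers d with d² dividing k (a finite set when k ≠ 0, and all square-free d when k = 0, in which case the series converges absolutely). -/

import Mathlib

/-- `σ_d = (1/d²)·∏_{p prime, p ∤ d} (1 − 2/p²)`. -/
noncomputable def sigmaSF (d : ℕ) : ℝ :=
  (1 / (d : ℝ) ^ 2) * ∏' p : {p : ℕ // p.Prime ∧ ¬ p ∣ d}, (1 - 2 / ((p : ℕ) : ℝ) ^ 2)

/-- Mirsky's second correlation function
`c₂(k) = ∏_{p², p²∣k} (1 − 1/p²) · ∏_{p, p²∤k} (1 − 2/p²)`. -/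
noncomputable def corr2 (k : ℤ) : ℝ :=
  (∏' p : {p : ℕ // p.Prime ∧ ((p : ℤ)) ^ 2 ∣ k}, (1 - 1 / ((p : ℕ) : ℝ) ^ 2)) *
  ∏' p : {p : ℕ // p.Prime ∧ ¬ ((p : ℤ)) ^ 2 ∣ k}, (1 - 2 / ((p : ℕ) : ℝ) ^ 2)

open scoped BigOperators

namespace Corr2Aux

noncomputable def hAux (d : ℕ) : ℝ := ∏ p ∈ d.primeFactors, (1 - 2 / (p : ℝ) ^ 2)⁻¹

noncomputable def fAux (k : ℤ) (d : ℕ) : ℝ :=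
  if Squarefree d ∧ ((d : ℤ)) ^ 2 ∣ k then (1 / (d : ℝ) ^ 2) * hAux d else 0

lemma factor_lt (p : ℕ) (hp : p.Prime) : 2 / (p:ℝ)^2 ≤ 1/2 := by
  have h2 : (2:ℝ) ≤ p := by exact_mod_cast hp.two_le
  rw [div_le_div_iff₀ (by positivity) (by norm_num)]
  nlinarith

lemma factor_pos (p : ℕ) (hp : p.Prime) : (0:ℝ) < 1 - 2 / (p:ℝ)^2 := by
  have := factor_lt p hp; linarith

lemma summable_primes (c : ℝ) :
    Summable (fun p : Nat.Primes => c / ((p : ℕ) : ℝ)^2) := by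
  have h : Summable (fun n : ℕ => c * (1 / (n:ℝ)^2)) :=
    (Real.summable_one_div_nat_pow.mpr one_lt_two).mul_left c
  have := h.comp_injective Nat.Primes.coe_nat_injective
  refine this.congr fun p => ?_
  simp [Function.comp, mul_one_div, div_eq_mul_inv]

lemma multipliable_of_pos_of_summable_log {ι : Type*} {g : ι → ℝ} (h1 : ∀ p, 0 < g p)
    (h2 : Summable fun p => Real.log (g p)) : Multipliable g :=
  Real.multipliable_of_summable_log h1 h2

lemma tprod_eq_exp_tsum_log {ι : Type*} {g : ι → ℝ} (h1 : ∀ p, 0 < g p)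
    (h2 : Summable fun p => Real.log (g p)) :
    (∏' p, g p) = Real.exp (∑' p, Real.log (g p)) := by
  have := Real.rexp_tsum_eq_tprod h1 h2
  exact this.symm

lemma abs_log_one_sub_le {y : ℝ} (hy0 : 0 ≤ y) (hy2 : y ≤ 1/2) :
    |Real.log (1 - y)| ≤ 2 * y := by
  rw [abs_le]
  constructor
  · have h5 : Real.log (1 - y) = - Real.log (1-y)⁻¹ := by
      rw [Real.log_inv]; ring
    have h6 : Real.log (1-y)⁻¹ ≤ (1-y)⁻¹ - 1 :=
      Real.log_le_sub_one_of_pos (inv_pos.mpr (by linarith))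
    have h7 : (1-y)⁻¹ ≤ 1 + 2*y := by
      rw [inv_eq_one_div, div_le_iff₀ (by linarith)]
      nlinarith
    rw [h5]; linarith
  · have h8 := Real.log_nonpos (x := 1 - y) (by linarith) (by linarith)
    linarith

lemma summable_logF :
    Summable (fun p : Nat.Primes => Real.log (1 - 2 / ((p : ℕ) : ℝ)^2)) := by
  have hb : Summable (fun p : Nat.Primes => 4 / ((p : ℕ):ℝ)^2) := summable_primes 4
  refine (Summable.of_nonneg_of_le (fun p => abs_nonneg _) (fun p => ?_) hb).of_abs
  have hy0 : (0:ℝ) ≤ 2 / ((p : ℕ):ℝ)^2 := by positivity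
  have hy2 : 2 / ((p : ℕ):ℝ)^2 ≤ 1/2 := factor_lt (p : ℕ) p.2
  have := abs_log_one_sub_le hy0 hy2
  have h4 : 4 / ((p : ℕ):ℝ)^2 = 2 * (2 / ((p : ℕ):ℝ)^2) := by ring
  rw [h4]
  exact this

lemma summable_logC :
    Summable (fun p : Nat.Primes => Real.log (1 + 4 / ((p : ℕ) : ℝ)^2)) := by
  have hb : Summable (fun p : Nat.Primes => 4 / ((p : ℕ):ℝ)^2) := summable_primes 4
  refine (Summable.of_nonneg_of_le (fun p => abs_nonneg _) (fun p => ?_) hb).of_abs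
  have h0 : (0:ℝ) ≤ 4 / ((p : ℕ):ℝ)^2 := by positivity
  rw [abs_of_nonneg (Real.log_nonneg (by linarith))]
  have := Real.log_le_sub_one_of_pos (show (0:ℝ) < 1 + 4 / ((p : ℕ):ℝ)^2 by linarith)
  linarith

lemma multipliableF : Multipliable (fun p : Nat.Primes => 1 - 2 / ((p : ℕ) : ℝ)^2) :=
  multipliable_of_pos_of_summable_log (fun p => factor_pos (p : ℕ) p.2) summable_logF

noncomputable def Fc : ℝ := ∏' p : Nat.Primes, (1 - 2 / ((p : ℕ) : ℝ)^2)
noncomputable def Cc : ℝ := ∏' p : Nat.Primes, (1 + 4 / ((p : ℕ) : ℝ)^2)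

lemma Cc_exp : Cc = Real.exp (∑' p : Nat.Primes, Real.log (1 + 4 / ((p : ℕ) : ℝ)^2)) :=
  tprod_eq_exp_tsum_log (fun p => by positivity) summable_logC

lemma Cc_pos : 0 < Cc := by rw [Cc_exp]; exact Real.exp_pos _

lemma hAux_pos (d : ℕ) : 0 < hAux d :=
  Finset.prod_pos fun p hp => by
    have := factor_pos p (Nat.prime_of_mem_primeFactors hp); positivity

lemma hAux_le (d : ℕ) : hAux d ≤ Cc := by
  have step1 : hAux d ≤ ∏ p ∈ d.primeFactors, (1 + 4 / (p:ℝ)^2) := by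
    refine Finset.prod_le_prod (fun p hp => ?_) (fun p hp => ?_)
    · have := factor_pos p (Nat.prime_of_mem_primeFactors hp); positivity
    · have hp' := Nat.prime_of_mem_primeFactors hp
      have h2 : (2:ℝ) ≤ p := by exact_mod_cast hp'.two_le
      have hpos := factor_pos p hp'
      rw [inv_le_iff_one_le_mul₀ hpos]
      have hq : (0:ℝ) < (p:ℝ)^2 := by positivity
      have hp2 : (4:ℝ) ≤ (p:ℝ)^2 := by nlinarith
      have e1 : (1 + 4 / (p:ℝ)^2) * (1 - 2 / (p:ℝ)^2) =
          1 + 2/(p:ℝ)^2 - 8/((p:ℝ)^2)^2 := by field_simp; ring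
      rw [e1]
      have : 8/((p:ℝ)^2)^2 ≤ 2/(p:ℝ)^2 := by
        rw [div_le_div_iff₀ (by positivity) hq]
        nlinarith
      linarith
  refine step1.trans ?_
  have step2 : ∏ p ∈ d.primeFactors, (1 + 4 / (p:ℝ)^2) =
      Real.exp (∑ p ∈ d.primeFactors, Real.log (1 + 4 / (p:ℝ)^2)) := by
    rw [Real.exp_sum]
    exact Finset.prod_congr rfl fun p hp => (Real.exp_log (by positivity)).symm
  have step3 : (∑ p ∈ d.primeFactors, Real.log (1 + 4 / (p:ℝ)^2)) ≤
      ∑' q : Nat.Primes, Real.log (1 + 4 / ((q : ℕ):ℝ)^2) := by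
    have e0 : (∑ p ∈ d.primeFactors, Real.log (1 + 4 / (p:ℝ)^2)) =
        ∑' q : ↥d.primeFactors, Real.log (1 + 4 / ((q : ℕ):ℝ)^2) := by
      rw [tsum_fintype]
      exact (Finset.sum_coe_sort d.primeFactors
        (fun p => Real.log (1 + 4/(p:ℝ)^2))).symm
    rw [e0]
    refine Summable.tsum_le_tsum_of_inj
      (fun q : ↥d.primeFactors => (⟨q.1, Nat.prime_of_mem_primeFactors q.2⟩ : Nat.Primes))
      (fun a b hab => by
        have h9 : (⟨a.1, Nat.prime_of_mem_primeFactors a.2⟩ : Nat.Primes).val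
            = (⟨b.1, Nat.prime_of_mem_primeFactors b.2⟩ : Nat.Primes).val :=
          congrArg (fun q : Nat.Primes => q.val) hab
        exact Subtype.ext h9)
      (fun c _ => Real.log_nonneg (by
        have : (0:ℝ) ≤ 4/((c : ℕ):ℝ)^2 := by positivity
        linarith)) (fun i => le_refl _)
      Summable.of_finite summable_logC
  rw [step2, Cc_exp]
  exact Real.exp_le_exp.mpr step3

lemma fAux_nonneg (k : ℤ) (d : ℕ) : 0 ≤ fAux k d := by
  unfold fAux
  split_ifs with h
  · have := hAux_pos d; positivity
  · exact le_refl 0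

lemma summable_norm_fAux (k : ℤ) : Summable (fun n => ‖fAux k n‖) := by
  have hb : Summable (fun n : ℕ => Cc * (1 / (n:ℝ)^2)) :=
    (Real.summable_one_div_nat_pow.mpr one_lt_two).mul_left Cc
  refine Summable.of_nonneg_of_le (fun n => norm_nonneg _) (fun n => ?_) hb
  rw [Real.norm_eq_abs, abs_of_nonneg (fAux_nonneg k n)]
  unfold fAux
  split_ifs with h
  · have h1 : (0:ℝ) ≤ 1 / (n:ℝ)^2 := by positivity
    calc (1 / (n:ℝ)^2) * hAux n ≤ (1 / (n:ℝ)^2) * Cc :=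
          mul_le_mul_of_nonneg_left (hAux_le n) h1
      _ = Cc * (1 / (n:ℝ)^2) := by ring
  · have h1 : (0:ℝ) ≤ 1 / (n:ℝ)^2 := by positivity
    have := Cc_pos
    positivity





lemma hAux_one : hAux 1 = 1 := by simp [hAux]

lemma fAux_one (k : ℤ) : fAux k 1 = 1 := by
  rw [fAux, if_pos ⟨squarefree_one, by simp⟩, hAux_one]
  norm_num

lemma fAux_zero (k : ℤ) : fAux k 0 = 0 := by
  rw [fAux, if_neg]
  rintro ⟨h, -⟩
  exact not_squarefree_zero h

lemma cond_mul_iff {k : ℤ} {m n : ℕ} (h : Nat.Coprime m n) :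
    (Squarefree (m * n) ∧ (((m * n : ℕ) : ℤ)) ^ 2 ∣ k) ↔
      (Squarefree m ∧ ((m : ℤ)) ^ 2 ∣ k) ∧ (Squarefree n ∧ ((n : ℤ)) ^ 2 ∣ k) := by
  constructor
  · rintro ⟨hsq, hdvd⟩
    have hm : Squarefree m := hsq.squarefree_of_dvd (dvd_mul_right m n)
    have hn : Squarefree n := hsq.squarefree_of_dvd (dvd_mul_left n m)
    refine ⟨⟨hm, dvd_trans ?_ hdvd⟩, hn, dvd_trans ?_ hdvd⟩
    · push_cast
      exact pow_dvd_pow_of_dvd (dvd_mul_right _ _) 2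
    · push_cast
      exact pow_dvd_pow_of_dvd (dvd_mul_left _ _) 2
  · rintro ⟨⟨hm, hdm⟩, hn, hdn⟩
    refine ⟨(Nat.squarefree_mul h).mpr ⟨hm, hn⟩, ?_⟩
    have hcop : IsCoprime ((m:ℤ)^2) ((n:ℤ)^2) := (Nat.Coprime.isCoprime h).pow
    push_cast [mul_pow]
    exact hcop.mul_dvd hdm hdn

lemma hAux_mul {m n : ℕ} (hm : m ≠ 0) (hn : n ≠ 0) (h : Nat.Coprime m n) :
    hAux (m * n) = hAux m * hAux n := by
  unfold hAux
  rw [Nat.primeFactors_mul hm hn, Finset.prod_union h.disjoint_primeFactors]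

lemma fAux_mul (k : ℤ) {m n : ℕ} (h : Nat.Coprime m n) :
    fAux k (m * n) = fAux k m * fAux k n := by
  unfold fAux
  rcases em ((Squarefree m ∧ ((m : ℤ)) ^ 2 ∣ k) ∧ (Squarefree n ∧ ((n : ℤ)) ^ 2 ∣ k)) with H | H
  · rw [if_pos ((cond_mul_iff h).mpr H), if_pos H.1, if_pos H.2,
      hAux_mul H.1.1.ne_zero H.2.1.ne_zero h]
    push_cast
    ring
  · rw [if_neg (fun hc => H ((cond_mul_iff h).mp hc))]
    rcases not_and_or.mp H with H1 | H1
    · rw [if_neg H1, zero_mul]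
    · rw [if_neg H1, mul_zero]

lemma tsum_fAux_pow (k : ℤ) (p : ℕ) (hp : p.Prime) :
    ∑' e : ℕ, fAux k (p ^ e) = 1 + fAux k p := by
  have hvanish : ∀ e ∉ ({0, 1} : Finset ℕ), fAux k (p ^ e) = 0 := by
    intro e he
    have he2 : 2 ≤ e := by
      rcases e with _ | e
      · simp at he
      rcases e with _ | e
      · simp at he
      omega
    rw [fAux, if_neg]
    rintro ⟨hsq, -⟩
    have hdvd : p * p ∣ p ^ e := by
      have : p ^ 2 ∣ p ^ e := pow_dvd_pow p he2
      rwa [sq] at this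
    exact hp.one_lt.ne' (Nat.isUnit_iff.mp (hsq p hdvd))
  rw [tsum_eq_sum hvanish, Finset.sum_pair (by norm_num : (0:ℕ) ≠ 1)]
  rw [pow_zero, pow_one, fAux_one]



end Corr2Aux

namespace Corr2Aux

lemma euler (k : ℤ) :
    HasProd (fun p : Nat.Primes => ∑' e : ℕ, fAux k ((p : ℕ) ^ e)) (∑' n, fAux k n) :=
  EulerProduct.eulerProduct_hasProd (fAux_one k) (fun {_ _} h => fAux_mul k h)
    (summable_norm_fAux k) (fAux_zero k)

lemma W_eq (k : ℤ) (p : Nat.Primes) :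
    (1 - 2 / ((p : ℕ) : ℝ) ^ 2) * ∑' e : ℕ, fAux k ((p : ℕ) ^ e)
      = if (((p : ℕ) : ℤ)) ^ 2 ∣ k then 1 - 1 / ((p : ℕ) : ℝ) ^ 2
        else 1 - 2 / ((p : ℕ) : ℝ) ^ 2 := by
  obtain ⟨p, hp⟩ := p
  rw [tsum_fAux_pow k p hp]
  have hh : hAux p = (1 - 2 / (p : ℝ) ^ 2)⁻¹ := by
    rw [hAux, Nat.Prime.primeFactors hp, Finset.prod_singleton]
  have hne := (factor_pos p hp).ne'
  split_ifs with hdvd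
  · rw [fAux, if_pos ⟨hp.squarefree, hdvd⟩, hh]
    rw [mul_add, mul_one, mul_comm (1 / (p:ℝ)^2), ← mul_assoc,
      mul_inv_cancel₀ hne, one_mul]
    ring
  · rw [fAux, if_neg (fun hc => hdvd hc.2), add_zero, mul_one]

lemma hasProdW (k : ℤ) :
    HasProd (fun p : Nat.Primes =>
        if (((p : ℕ) : ℤ)) ^ 2 ∣ k then 1 - 1 / ((p : ℕ) : ℝ) ^ 2
        else 1 - 2 / ((p : ℕ) : ℝ) ^ 2)
      (Fc * ∑' n, fAux k n) := by
  have h := multipliableF.hasProd.mul (euler k)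
  have hfe := funext (W_eq k)
  rw [← hfe]
  exact h

lemma Wf_pos (k : ℤ) (p : Nat.Primes) :
    0 < (if (((p : ℕ) : ℤ)) ^ 2 ∣ k then 1 - 1 / ((p : ℕ) : ℝ) ^ 2
      else 1 - 2 / ((p : ℕ) : ℝ) ^ 2) := by
  have h1 := factor_pos (p : ℕ) p.2
  have h2 : (2:ℝ) ≤ ((p : ℕ) : ℝ) := by exact_mod_cast p.2.two_le
  have hx : (0:ℝ) < ((p : ℕ) : ℝ)^2 := by nlinarith
  have hy1 : 1/((p : ℕ):ℝ)^2 ≤ 2/((p : ℕ):ℝ)^2 := by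
    exact div_le_div_of_nonneg_right (by norm_num) hx.le
  split_ifs
  · linarith
  · exact h1

lemma summable_logW (k : ℤ) :
    Summable (fun p : Nat.Primes =>
      Real.log (if (((p : ℕ) : ℤ)) ^ 2 ∣ k then 1 - 1 / ((p : ℕ) : ℝ) ^ 2
        else 1 - 2 / ((p : ℕ) : ℝ) ^ 2)) := by
  refine (Summable.of_nonneg_of_le (fun p => abs_nonneg _) (fun p => ?_)
    (summable_primes 4)).of_abs
  have h2 : (2:ℝ) ≤ ((p : ℕ) : ℝ) := by exact_mod_cast p.2.two_le
  have hx : (0:ℝ) < ((p : ℕ) : ℝ)^2 := by nlinarith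
  have hy2 : 2/((p : ℕ):ℝ)^2 ≤ 1/2 := factor_lt (p : ℕ) p.2
  have hy1 : 1/((p : ℕ):ℝ)^2 ≤ 2/((p : ℕ):ℝ)^2 := by
    exact div_le_div_of_nonneg_right (by norm_num) hx.le
  have he : 2 * (2/((p : ℕ):ℝ)^2) = 4/((p : ℕ):ℝ)^2 := by ring
  split_ifs with h
  · have := abs_log_one_sub_le (y := 1/((p : ℕ):ℝ)^2) (by positivity) (by linarith)
    linarith
  · have := abs_log_one_sub_le (y := 2/((p : ℕ):ℝ)^2) (by positivity) hy2
    linarith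

lemma corr2_eq (k : ℤ) : corr2 k = Fc * ∑' n, fAux k n := by
  have hW := hasProdW k
  have hWpos := Wf_pos k
  have hlogW := summable_logW k
  set W : Nat.Primes → ℝ := fun p =>
    if (((p : ℕ) : ℤ)) ^ 2 ∣ k then 1 - 1 / ((p : ℕ) : ℝ) ^ 2
    else 1 - 2 / ((p : ℕ) : ℝ) ^ 2 with hWdef
  set s : Set Nat.Primes := {p | (((p : ℕ) : ℤ)) ^ 2 ∣ k} with hs
  have hms : Multipliable (fun q : ↥s => W q) :=
    multipliable_of_pos_of_summable_log (fun q => hWpos q) (hlogW.subtype s)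
  have hmsc : Multipliable (fun q : ↥sᶜ => W q) :=
    multipliable_of_pos_of_summable_log (fun q => hWpos q) (hlogW.subtype sᶜ)
  have hsplit := Multipliable.tprod_mul_tprod_compl (f := W) hms hmsc
  have h1 : (∏' x : ↥s, W x) =
      ∏' p : {p : ℕ // p.Prime ∧ ((p : ℤ)) ^ 2 ∣ k}, (1 - 1 / ((p : ℕ) : ℝ) ^ 2) := by
    let e₁ : {p : ℕ // p.Prime ∧ ((p : ℤ)) ^ 2 ∣ k} ≃ ↥s :=
      { toFun := fun x => ⟨⟨x.1, x.2.1⟩, x.2.2⟩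
        invFun := fun q => ⟨((q : Nat.Primes) : ℕ), (q : Nat.Primes).2, q.2⟩
        left_inv := fun x => rfl
        right_inv := fun q => rfl }
    have := Equiv.tprod_eq e₁ (fun q : ↥s => W q)
    rw [← this]
    refine tprod_congr fun x => ?_
    simp only [hWdef]
    exact if_pos x.2.2
  have h2 : (∏' x : ↥sᶜ, W x) =
      ∏' p : {p : ℕ // p.Prime ∧ ¬ ((p : ℤ)) ^ 2 ∣ k}, (1 - 2 / ((p : ℕ) : ℝ) ^ 2) := by
    let e₂ : {p : ℕ // p.Prime ∧ ¬ ((p : ℤ)) ^ 2 ∣ k} ≃ ↥sᶜ :=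
      { toFun := fun x => ⟨⟨x.1, x.2.1⟩, x.2.2⟩
        invFun := fun q => ⟨((q : Nat.Primes) : ℕ), (q : Nat.Primes).2, q.2⟩
        left_inv := fun x => rfl
        right_inv := fun q => rfl }
    have := Equiv.tprod_eq e₂ (fun q : ↥sᶜ => W q)
    rw [← this]
    refine tprod_congr fun x => ?_
    simp only [hWdef]
    exact if_neg x.2.2
  have hval : (∏' p : Nat.Primes, W p) = Fc * ∑' n, fAux k n := hW.tprod_eq
  rw [corr2, ← h1, ← h2, hsplit, hval]

lemma sigma_eq {d : ℕ} (hd : Squarefree d) :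
    sigmaSF d = Fc * ((1 / (d : ℝ) ^ 2) * hAux d) := by
  have hd0 : d ≠ 0 := hd.ne_zero
  set t : Set Nat.Primes := {p | (p : ℕ) ∣ d} with ht
  have hmt : Multipliable (fun q : ↥t => 1 - 2 / (((q : Nat.Primes) : ℕ) : ℝ) ^ 2) :=
    multipliable_of_pos_of_summable_log
      (fun q => factor_pos ((q : Nat.Primes) : ℕ) (q : Nat.Primes).2)
      (summable_logF.subtype t)
  have hmtc : Multipliable (fun q : ↥tᶜ => 1 - 2 / (((q : Nat.Primes) : ℕ) : ℝ) ^ 2) :=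
    multipliable_of_pos_of_summable_log
      (fun q => factor_pos ((q : Nat.Primes) : ℕ) (q : Nat.Primes).2)
      (summable_logF.subtype tᶜ)
  have hsplit := Multipliable.tprod_mul_tprod_compl
    (f := fun p : Nat.Primes => 1 - 2 / ((p : ℕ) : ℝ) ^ 2) hmt hmtc
  have h1 : (∏' q : ↥t, (1 - 2 / (((q : Nat.Primes) : ℕ) : ℝ) ^ 2)) =
      ∏ p ∈ d.primeFactors, (1 - 2 / (p : ℝ) ^ 2) := by
    let e : ↥d.primeFactors ≃ ↥t :=
      { toFun := fun q =>
          ⟨⟨q.1, Nat.prime_of_mem_primeFactors q.2⟩, Nat.dvd_of_mem_primeFactors q.2⟩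
        invFun := fun q =>
          ⟨((q : Nat.Primes) : ℕ),
            Nat.mem_primeFactors.mpr ⟨(q : Nat.Primes).2, q.2, hd0⟩⟩
        left_inv := fun q => rfl
        right_inv := fun q => rfl }
    have := Equiv.tprod_eq e (fun q : ↥t => 1 - 2 / (((q : Nat.Primes) : ℕ) : ℝ) ^ 2)
    rw [← this, tprod_fintype]
    exact (Finset.prod_congr rfl fun b _ => rfl).trans
      (Finset.prod_coe_sort d.primeFactors (fun p => 1 - 2 / (p : ℝ) ^ 2))
  have h2 : (∏' q : ↥tᶜ, (1 - 2 / (((q : Nat.Primes) : ℕ) : ℝ) ^ 2)) =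
      ∏' p : {p : ℕ // p.Prime ∧ ¬ p ∣ d}, (1 - 2 / ((p : ℕ) : ℝ) ^ 2) := by
    let e : {p : ℕ // p.Prime ∧ ¬ p ∣ d} ≃ ↥tᶜ :=
      { toFun := fun x => ⟨⟨x.1, x.2.1⟩, x.2.2⟩
        invFun := fun q => ⟨((q : Nat.Primes) : ℕ), (q : Nat.Primes).2, q.2⟩
        left_inv := fun x => rfl
        right_inv := fun q => rfl }
    exact ((Equiv.tprod_eq e
      (fun q : ↥tᶜ => 1 - 2 / (((q : Nat.Primes) : ℕ) : ℝ) ^ 2)).symm).trans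
      (tprod_congr fun x => rfl)
  have hP : (∏ p ∈ d.primeFactors, (1 - 2 / (p : ℝ) ^ 2)) ≠ 0 :=
    ne_of_gt (Finset.prod_pos fun p hp => factor_pos p (Nat.prime_of_mem_primeFactors hp))
  have hinv : hAux d = (∏ p ∈ d.primeFactors, (1 - 2 / (p : ℝ) ^ 2))⁻¹ := by
    rw [hAux, Finset.prod_inv_distrib]
  have hF : Fc = (∏ p ∈ d.primeFactors, (1 - 2 / (p : ℝ) ^ 2)) *
      ∏' q : ↥tᶜ, (1 - 2 / (((q : Nat.Primes) : ℕ) : ℝ) ^ 2) := by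
    rw [← h1]; exact hsplit.symm
  rw [sigmaSF, ← h2, hinv, hF]
  have : (∏ p ∈ d.primeFactors, (1 - 2 / (p : ℝ) ^ 2)) *
        (∏' q : ↥tᶜ, (1 - 2 / (((q : Nat.Primes) : ℕ) : ℝ) ^ 2)) *
        (1 / (d : ℝ) ^ 2 * (∏ p ∈ d.primeFactors, (1 - 2 / (p : ℝ) ^ 2))⁻¹)
      = 1 / (d : ℝ) ^ 2 *
        (∏' q : ↥tᶜ, (1 - 2 / (((q : Nat.Primes) : ℕ) : ℝ) ^ 2)) *
        ((∏ p ∈ d.primeFactors, (1 - 2 / (p : ℝ) ^ 2)) *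
          (∏ p ∈ d.primeFactors, (1 - 2 / (p : ℝ) ^ 2))⁻¹) := by ring
  rw [this, mul_inv_cancel₀ hP, mul_one]

end Corr2Aux


open Corr2Aux

/-- For every integer `k`, `c₂(k) = Σ_{d square-free, d² ∣ k} σ_d`, the series being
absolutely convergent. -/
theorem corr2_eq_sum_sigmaSF (k : ℤ) :
    Summable (fun d : {d : ℕ // Squarefree d ∧ ((d : ℤ)) ^ 2 ∣ k} => |sigmaSF d|)
    ∧ HasSum (fun d : {d : ℕ // Squarefree d ∧ ((d : ℤ)) ^ 2 ∣ k} => sigmaSF d)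
      (corr2 k) := by
  have hsupp : Function.support (fAux k) ⊆ {d | Squarefree d ∧ ((d : ℤ)) ^ 2 ∣ k} := by
    intro d hd
    by_contra hdS
    have hdS' : ¬ (Squarefree d ∧ ((d : ℤ)) ^ 2 ∣ k) := hdS
    exact hd (by rw [fAux, if_neg hdS'])
  have hSummable : Summable (fAux k) := (summable_norm_fAux k).of_norm
  have hs1 : HasSum (fun d : {d : ℕ // Squarefree d ∧ ((d : ℤ)) ^ 2 ∣ k} => fAux k d)
      (∑' n, fAux k n) :=
    (hasSum_subtype_iff_of_support_subset hsupp).mpr hSummable.hasSum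
  have hpt : ∀ d : {d : ℕ // Squarefree d ∧ ((d : ℤ)) ^ 2 ∣ k},
      Fc * fAux k d = sigmaSF d := by
    intro d
    rw [fAux, if_pos d.2, sigma_eq d.2.1]
  constructor
  · refine (hs1.summable.mul_left |Fc|).congr fun d => ?_
    rw [← hpt d, abs_mul, abs_of_nonneg (fAux_nonneg k d)]
  · have hs2 : HasSum (fun d : {d : ℕ // Squarefree d ∧ ((d : ℤ)) ^ 2 ∣ k} =>
        Fc * fAux k d) (Fc * ∑' n, fAux k n) := hs1.mul_left Fc
    rw [corr2_eq k]
    exact (funext hpt) ▸ hs2
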